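/- arXiv:1003.4917 — 2 statements merged into one kernel-verified Lean document; each statement's English description precedes it below -/
import Mathlib

section
/- For every x > 0, every i ∈ {1,…,m} and every λ ∈ ℂ with λ ≠ -β_i, the quantity m_i(x,λ) := (∂^{m_i}/(-∂β)^{m_i})[ (e^{(λ+β)x} Û_{[-x,0]}(-β) - Û_{[-x,0]}(λ)) / (λ+β) ] evaluated at β = β_i equals ∫_{[-x,0]} e^{-λz} μ_i(dz), where μ_i is the restriction to [-x,0] of the convolution of the (complex) measure 1_{[-x,0]}(u) u^{m_i} e^{-β_i u} du with the measure 1_{[-x,0]}(y) Û(dy). In particular m_i(x,·) extends to an entire function of λ which is the Laplace transform of a measure supported in [-x,0]. -/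
open MeasureTheory ProbabilityTheory Filter Set Complex
open scoped ENNReal NNReal

noncomputable section

/-- A real-valued Lévy process (càdlàg, stationary independent increments, `X 0 = 0`)
killed at an independent exponential time `ζ` of rate `q ≥ 0`, with Lévy exponent `φ`
given by the Lévy–Khintchine formula with drift `drift`, Gaussian coefficient `σ2`
and Lévy measure `π`. -/
structure KilledLevy (Ω : Type*) [MeasurableSpace Ω] where
  P : Measure Ω
  isProb : IsProbabilityMeasure P
  X : ℝ → Ω → ℝ
  ζ : Ω → ℝ≥0∞
  q : ℝ
  drift : ℝ
  σ2 : ℝ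
  π : Measure ℝ
  φ : ℂ → ℂ
  hq : 0 ≤ q
  hσ2 : 0 ≤ σ2
  hX0 : ∀ ω, X 0 ω = 0
  hXmeas : ∀ t : ℝ, Measurable (X t)
  hζmeas : Measurable ζ
  /-- right-continuity of paths -/
  hrc : ∀ ω, ∀ t : ℝ, 0 ≤ t → ContinuousWithinAt (fun s => X s ω) (Ici t) t
  /-- existence of left limits -/
  hll : ∀ ω, ∀ t : ℝ, 0 < t → ∃ l : ℝ, Tendsto (fun s => X s ω) (nhdsWithin t (Iio t)) (nhds l)
  /-- stationarity of increments -/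
  hstat : ∀ s t : ℝ, 0 ≤ s → s ≤ t →
    P.map (fun ω => X t ω - X s ω) = P.map (X (t - s))
  /-- independence of increments -/
  hincr : ∀ (k : ℕ) (ts : Fin (k + 1) → ℝ), Monotone ts → 0 ≤ ts 0 →
    iIndepFun
      (fun (i : Fin k) ω => X (ts i.succ) ω - X (ts i.castSucc) ω) P
  hπ0 : π {0} = 0
  hπint : (∫⁻ y : ℝ, ENNReal.ofReal (min 1 (y ^ 2)) ∂π) ≠ ⊤
  /-- `ζ` is exponentially distributed with rate `q` (`ζ = ∞` a.s. when `q = 0`) -/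
  hζlaw : ∀ t : ℝ, 0 ≤ t → P {ω | ENNReal.ofReal t < ζ ω} = ENNReal.ofReal (Real.exp (-q * t))
  /-- `ζ` is independent of the path of `X` -/
  hζindep : Indep (MeasurableSpace.comap ζ inferInstance)
      (⨆ t : ℝ, MeasurableSpace.comap (X t) inferInstance) P
  /-- Lévy–Khintchine formula on the imaginary axis -/
  hLK : ∀ u : ℝ, φ (u * Complex.I) = q + drift * (u * Complex.I) - σ2 / 2 * (u * Complex.I) ^ 2 +
      ∫ y : ℝ, (1 - Complex.exp (-(u * Complex.I) * y)
        - (u * Complex.I) * y * (if |y| ≤ 1 then 1 else 0)) ∂π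
  /-- the characteristic identity `E[e^{-iuX_t} 1_{t<ζ}] = e^{-tφ(iu)}` -/
  hchar : ∀ t : ℝ, 0 ≤ t → ∀ u : ℝ,
      (∫ ω, (if ENNReal.ofReal t < ζ ω then Complex.exp (-(u * Complex.I) * X t ω) else 0) ∂P) =
        Complex.exp (-(t : ℂ) * φ (u * Complex.I))
  hφne : φ ≠ 0

namespace KilledLevy

variable {Ω : Type*} [MeasurableSpace Ω] (L : KilledLevy Ω)

/-- running supremum `S_t` -/
def Sr (t : ℝ) (ω : Ω) : ℝ := sSup ((fun s => L.X s ω) '' Icc 0 t)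

/-- running infimum `I_t` -/
def Ir (t : ℝ) (ω : Ω) : ℝ := sInf ((fun s => L.X s ω) '' Icc 0 t)

/-- overall supremum `S_ζ` -/
def Sz (ω : Ω) : ℝ := sSup ((fun t => L.X t ω) '' {t : ℝ | 0 ≤ t ∧ ENNReal.ofReal t < L.ζ ω})

/-- overall infimum `I_ζ` -/
def Iz (ω : Ω) : ℝ := sInf ((fun t => L.X t ω) '' {t : ℝ | 0 ≤ t ∧ ENNReal.ofReal t < L.ζ ω})

/-- position at death, `X_ζ` (left limit of the path at the killing time) -/
def Xz (ω : Ω) : ℝ :=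
  limUnder (nhdsWithin ((L.ζ ω).toReal) (Iio ((L.ζ ω).toReal))) (fun t => L.X t ω)

/-- `V_x = inf {t : X_t - S_t < -x}` -/
def Vlow (x : ℝ) (ω : Ω) : ℝ≥0∞ :=
  ⨅ t : {t : ℝ // 0 ≤ t ∧ L.X t ω - L.Sr t ω < -x}, ENNReal.ofReal t.1

/-- `V^x = inf {t : X_t - I_t > x}` -/
def Vup (x : ℝ) (ω : Ω) : ℝ≥0∞ :=
  ⨅ t : {t : ℝ // 0 ≤ t ∧ x < L.X t ω - L.Ir t ω}, ENNReal.ofReal t.1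

/-- `U_x = inf {t : S_t - I_t > x}` -/
def Uxt (x : ℝ) (ω : Ω) : ℝ≥0∞ :=
  ⨅ t : {t : ℝ // 0 ≤ t ∧ x < L.Sr t ω - L.Ir t ω}, ENNReal.ofReal t.1

/-- `T_x = inf {t : X_t < -x}` (first passage below `-x`) -/
def Tlow (x : ℝ) (ω : Ω) : ℝ≥0∞ :=
  ⨅ t : {t : ℝ // 0 ≤ t ∧ L.X t ω < -x}, ENNReal.ofReal t.1

/-- `T^x = inf {t : X_t > x}` (first passage above `x`) -/
def Tup (x : ℝ) (ω : Ω) : ℝ≥0∞ :=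
  ⨅ t : {t : ℝ // 0 ≤ t ∧ x < L.X t ω}, ENNReal.ofReal t.1

/-- `T_a^b = inf {t : X_t ∉ [-a, b]}` (exit time of `[-a,b]`) -/
def Tab (a b : ℝ) (ω : Ω) : ℝ≥0∞ :=
  ⨅ t : {t : ℝ // 0 ≤ t ∧ L.X t ω ∉ Icc (-a) b}, ENNReal.ofReal t.1

/-- `E ∫_0^ζ e^{-λ₁ I_t} 1_{S_t - I_t ≤ x} e^{-λ₂ (X_t - I_t)} dt` -/
def potA (x : ℝ) (l1 l2 : ℂ) : ℂ :=
  ∫ ω, (∫ t in Ioi (0 : ℝ),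
    (if ENNReal.ofReal t < L.ζ ω ∧ L.Sr t ω - L.Ir t ω ≤ x then
      Complex.exp (-l1 * L.Ir t ω) * Complex.exp (-l2 * (L.X t ω - L.Ir t ω)) else 0)) ∂L.P

/-- `E ∫_0^ζ e^{-λ₂ S_t} 1_{S_t - I_t ≤ x} e^{-λ₁ (X_t - S_t)} dt` -/
def potB (x : ℝ) (l1 l2 : ℂ) : ℂ :=
  ∫ ω, (∫ t in Ioi (0 : ℝ),
    (if ENNReal.ofReal t < L.ζ ω ∧ L.Sr t ω - L.Ir t ω ≤ x then
      Complex.exp (-l2 * L.Sr t ω) * Complex.exp (-l1 * (L.X t ω - L.Sr t ω)) else 0)) ∂L.P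

end KilledLevy

/-- number of earlier occurrences of the value `v i` in the family `v`, i.e.
the multiplicities `n_j = #{k < j : γ_k = γ_j}` and `m_i = #{k < i : β_k = β_i}`. -/
def multBefore {k : ℕ} (v : Fin k → ℂ) (i : Fin k) : ℕ :=
  (Finset.univ.filter (fun k' => k' < i ∧ v k' = v i)).card

/-- Assumption A : the restriction of the Lévy measure to `(0,∞)` is
`∑ c_j y^{n_j}/n_j! e^{-γ_j y} dy` where `-γ_1, …, -γ_n` (with `Re γ_j > 0`) are listed
with multiplicity, `n_j = #{k < j : γ_k = γ_j}`. -/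
structure AssumptionA {Ω : Type*} [MeasurableSpace Ω] (L : KilledLevy Ω) where
  n : ℕ
  c : Fin n → ℂ
  γ : Fin n → ℂ
  hγ : ∀ j, 0 < (γ j).re
  hdensity : ∀ s : Set ℝ, MeasurableSet s → s ⊆ Ioi 0 →
    ((L.π s).toReal : ℂ) = ∫ y in s, ∑ j, c j * (y : ℂ) ^ (multBefore γ j) /
      (Nat.factorial (multBefore γ j)) * Complex.exp (-γ j * y)

namespace AssumptionA

variable {Ω : Type*} [MeasurableSpace Ω] {L : KilledLevy Ω} (A : AssumptionA L)

/-- `n_j = #{k < j : γ_k = γ_j}` -/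
def nj (j : Fin A.n) : ℕ := multBefore A.γ j

/-- the entries `i_j(λ)` -/
def ifun (l : ℂ) (j : Fin A.n) : ℂ :=
  (-1 : ℂ) ^ (A.nj j) * iteratedDeriv (A.nj j) (fun g => 1 / (l + g)) (A.γ j)

/-- the line `l = (1_{n_j = 0})_j` -/
def lvec (j : Fin A.n) : ℂ := if A.nj j = 0 then 1 else 0

end AssumptionA

/-- The Wiener–Hopf factorisation data : `ψ` is the exponent of a (killed) subordinator,
`ccψ` the exponent of the negative of a (killed) subordinator, `ψ·ccψ = φ` on `iℝ`,
and `Uh = Û` is the measure on `(-∞,0]` whose Laplace transform is `1/ccψ`. -/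
structure WHFactor {Ω : Type*} [MeasurableSpace Ω] (L : KilledLevy Ω) where
  ψ : ℂ → ℂ
  ccψ : ℂ → ℂ
  κp : ℝ
  dp : ℝ
  νp : Measure ℝ
  hκp : 0 ≤ κp
  hdp : 0 ≤ dp
  hνpsupp : νp (Iic 0) = 0
  hνpint : (∫⁻ y : ℝ, ENNReal.ofReal (min 1 y) ∂νp) ≠ ⊤
  hψrep : ∀ l : ℂ, 0 ≤ l.re →
    ψ l = κp + dp * l + ∫ y : ℝ, (1 - Complex.exp (-l * y)) ∂νp
  κm : ℝ
  dm : ℝ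
  νm : Measure ℝ
  hκm : 0 ≤ κm
  hdm : 0 ≤ dm
  hνmsupp : νm (Ici 0) = 0
  hνmint : (∫⁻ y : ℝ, ENNReal.ofReal (min 1 |y|) ∂νm) ≠ ⊤
  hccψrep : ∀ l : ℂ, l.re ≤ 0 →
    ccψ l = κm - dm * l + ∫ y : ℝ, (1 - Complex.exp (-l * y)) ∂νm
  hfact : ∀ u : ℝ, ψ (u * Complex.I) * ccψ (u * Complex.I) = L.φ (u * Complex.I)
  Uh : Measure ℝ
  hUhsf : SigmaFinite Uh
  hUhsupp : Uh (Ioi 0) = 0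
  hUhint : ∀ l : ℂ, l.re < 0 → Integrable (fun y : ℝ => Complex.exp (-l * y)) Uh
  hUhlap : ∀ l : ℂ, l.re < 0 → (∫ y : ℝ, Complex.exp (-l * y) ∂Uh) = 1 / ccψ l

/-- Wiener–Hopf data together with the normalisation
`ψ(λ) = ∏ (λ+β_i) / ∏ (λ+γ_j)` of the Wiener–Hopf theorem, where `-β_1,…,-β_m`
are the roots of `φ` in `{Re λ < 0}` (with multiplicity), together with `0` in the
appropriate case ; `m = n` or `m = n + 1`. -/
structure WHNorm {Ω : Type*} [MeasurableSpace Ω] (L : KilledLevy Ω) (A : AssumptionA L) extends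
    WHFactor L where
  m : ℕ
  β : Fin m → ℂ
  hψform : ∀ l : ℂ, (∏ j, (l + A.γ j)) ≠ 0 →
    ψ l * ∏ j, (l + A.γ j) = ∏ i, (l + β i)
  hmn : m = A.n ∨ m = A.n + 1

namespace WHNorm

variable {Ω : Type*} [MeasurableSpace Ω] {L : KilledLevy Ω} {A : AssumptionA L}
  (W : WHNorm L A)

/-- `Û_{[-x,0]}(λ)` -/
def UB (x : ℝ) (l : ℂ) : ℂ := ∫ y in Icc (-x) (0 : ℝ), Complex.exp (-l * y) ∂W.Uh

/-- `Û_{(-∞,-x)}(λ)` -/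
def UT (x : ℝ) (l : ℂ) : ℂ := ∫ y in Iio (-x), Complex.exp (-l * y) ∂W.Uh

/-- `m_i = #{k < i : β_k = β_i}` -/
def mi (i : Fin W.m) : ℕ := multBefore W.β i


/-- the entries `m_i(x,λ)` -/
def mfun (x : ℝ) (l : ℂ) (i : Fin W.m) : ℂ :=
  (-1 : ℂ) ^ (W.mi i) * iteratedDeriv (W.mi i)
    (fun b => (Complex.exp ((l + b) * x) * W.UB x (-b) - W.UB x l) / (l + b)) (W.β i)

/-- the entries `n_j(x,λ)` -/
def nfun (x : ℝ) (l : ℂ) (j : Fin A.n) : ℂ :=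
  (-1 : ℂ) ^ (A.nj j) * iteratedDeriv (A.nj j)
    (fun g => (Complex.exp (-l * x) * W.UT x l - Complex.exp (g * x) * W.UT x (-g)) / (l + g))
    (A.γ j)

/-- the entries `v_j(x)` -/
def vfun (x : ℝ) (j : Fin A.n) : ℂ :=
  -((-1 : ℂ) ^ (A.nj j) * iteratedDeriv (A.nj j)
    (fun g => Complex.exp (g * x) * W.UT x (-g)) (A.γ j))

/-- the entries `w_i(x)` -/
def wfun (x : ℝ) (i : Fin W.m) : ℂ :=
  (-1 : ℂ) ^ (W.mi i) * iteratedDeriv (W.mi i)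
    (fun b => Complex.exp (b * x) * W.UB x (-b)) (W.β i)

/-- the entries `w'_i(x)` (here `cu` denotes the constant `ccu(-x)`) -/
def wpfun (x : ℝ) (cu : ℂ) (i : Fin W.m) : ℂ :=
  (-1 : ℂ) ^ (W.mi i) * iteratedDeriv (W.mi i)
    (fun b => b * Complex.exp (b * x) * W.UB x (-b) + cu) (W.β i)

/-- the matrix `W(x)` -/
def Wmat (x : ℝ) : Matrix (Fin W.m) (Fin A.n) ℂ :=
  Matrix.of fun i j =>
    (-1 : ℂ) ^ (W.mi i + A.nj j) * iteratedDeriv (W.mi i)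
      (fun b => iteratedDeriv (A.nj j)
        (fun g => (Complex.exp (b * x) * W.UB x (-b) + Complex.exp (g * x) * W.UT x (-g)) /
          (b - g)) (A.γ j)) (W.β i)


/-- the column `c = (1_{m_i = 0})_i` -/
def cvec (i : Fin W.m) : ℂ := if W.mi i = 0 then 1 else 0

end WHNorm

/-- bordered square matrix `[[a, v], [w, M]]`. -/
def brd1 {k : ℕ} (a : ℂ) (v : Fin k → ℂ) (w : Fin k → ℂ) (M : Matrix (Fin k) (Fin k) ℂ) :
    Matrix (Fin (k + 1)) (Fin (k + 1)) ℂ :=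
  Matrix.of fun i j =>
    Fin.cases (Fin.cases a v j) (fun i' => Fin.cases (w i') (fun j' => M i' j') j) i

/-- doubly bordered square matrix `[[a, b, v], [w₁, w₂, M]]`. -/
def brd2 {k : ℕ} (a b : ℂ) (v : Fin k → ℂ) (w1 w2 : Fin (k + 1) → ℂ)
    (M : Matrix (Fin (k + 1)) (Fin k) ℂ) : Matrix (Fin (k + 2)) (Fin (k + 2)) ℂ :=
  Matrix.of fun i j =>
    Fin.cases (Fin.cases a (Fin.cases b v) j)
      (fun i' => Fin.cases (w1 i') (Fin.cases (w2 i') (fun j' => M i' j')) j) i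

/-- matrix `[w | M]` obtained by prepending the column `w`. -/
def augc {k : ℕ} (w : Fin (k + 1) → ℂ) (M : Matrix (Fin (k + 1)) (Fin k) ℂ) :
    Matrix (Fin (k + 1)) (Fin (k + 1)) ℂ :=
  Matrix.of fun i j => Fin.cases (w i) (fun j' => M i j') j

private lemma norm_cexp_le (z : ℂ) : ‖Complex.exp z‖ ≤ Real.exp ‖z‖ := by
  rw [Complex.norm_exp]
  exact Real.exp_le_exp.2 ((le_abs_self _).trans (Complex.abs_re_le_norm z))

private lemma norm_cexp_mul_le {a z : ℂ} {r : ℝ} (h : ‖z‖ ≤ r) :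
    ‖Complex.exp (a * z)‖ ≤ Real.exp (‖a‖ * r) := by
  refine (norm_cexp_le _).trans (Real.exp_le_exp.2 ?_)
  rw [norm_mul]
  exact mul_le_mul_of_nonneg_left h (norm_nonneg a)

private lemma integrable_of_bound {α : Type*} [MeasurableSpace α] {μ : Measure α}
    [IsFiniteMeasure μ] {f : α → ℂ} (hf : AEStronglyMeasurable f μ) (C : ℝ)
    (hb : ∀ᵐ a ∂μ, ‖f a‖ ≤ C) : Integrable f μ :=
  (integrable_const C).mono' hf hb

private lemma aux_hasDerivAt {α : Type*} [MeasurableSpace α] (μ : Measure α) [IsFiniteMeasure μ]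
    (v c : α → ℂ) (hv : Measurable v) (hc : Measurable c) (Cv Cc : ℝ)
    (hb : ∀ᵐ a ∂μ, ‖v a‖ ≤ Cv ∧ ‖c a‖ ≤ Cc) (b : ℂ) :
    HasDerivAt (fun z => ∫ a, v a * Complex.exp (-(z * c a)) ∂μ)
      (∫ a, (-(c a) * v a) * Complex.exp (-(b * c a)) ∂μ) b := by
  have hmeas : ∀ z : ℂ, AEStronglyMeasurable (fun a => v a * Complex.exp (-(z * c a))) μ :=
    fun z => (hv.mul ((measurable_const.mul hc).neg.cexp)).aestronglyMeasurable
  have hmeas' : AEStronglyMeasurable (fun a => (-(c a) * v a) * Complex.exp (-(b * c a))) μ :=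
    ((hc.neg.mul hv).mul ((measurable_const.mul hc).neg.cexp)).aestronglyMeasurable
  have hexp : ∀ z : ℂ, ‖z‖ ≤ ‖b‖ + 1 → ∀ a, ‖c a‖ ≤ Cc →
      ‖Complex.exp (-(z * c a))‖ ≤ Real.exp ((‖b‖ + 1) * Cc) := by
    intro z hz a ha
    refine (norm_cexp_le _).trans (Real.exp_le_exp.2 ?_)
    rw [norm_neg, norm_mul]
    exact mul_le_mul hz ha (norm_nonneg _) (by positivity)
  have key := hasDerivAt_integral_of_dominated_loc_of_deriv_le
    (F := fun z a => v a * Complex.exp (-(z * c a)))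
    (F' := fun z a => (-(c a) * v a) * Complex.exp (-(z * c a)))
    (bound := fun _ => Cc * Cv * Real.exp ((‖b‖ + 1) * Cc))
    (Metric.ball_mem_nhds b zero_lt_one) (Eventually.of_forall hmeas) ?_ hmeas' ?_ (integrable_const _) ?_
  · exact key.2
  · refine integrable_of_bound (hmeas b) (Cv * Real.exp ((‖b‖ + 1) * Cc)) ?_
    filter_upwards [hb] with a ha
    rw [norm_mul]
    exact mul_le_mul ha.1 (hexp b (by linarith [norm_nonneg b]) a ha.2) (norm_nonneg _)
      ((norm_nonneg _).trans ha.1)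
  · filter_upwards [hb] with a ha z hz
    rw [norm_mul, norm_mul, norm_neg]
    have hz' : ‖z‖ ≤ ‖b‖ + 1 := by
      have := mem_ball_iff_norm.1 hz
      calc ‖z‖ = ‖b + (z - b)‖ := by ring_nf
        _ ≤ ‖b‖ + ‖z - b‖ := norm_add_le _ _
        _ ≤ ‖b‖ + 1 := by linarith
    exact mul_le_mul (mul_le_mul ha.2 ha.1 (norm_nonneg _) ((norm_nonneg _).trans ha.2))
      (hexp z hz' a ha.2) (norm_nonneg _)
      (mul_nonneg ((norm_nonneg _).trans ha.2) ((norm_nonneg _).trans ha.1))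
  · refine Eventually.of_forall fun a z _ => ?_
    have h1 : HasDerivAt (fun z : ℂ => -(z * c a)) (-(1 * c a)) z :=
      ((hasDerivAt_id z).mul_const (c a)).neg
    have h3 := HasDerivAt.const_mul (v a) h1.cexp
    refine h3.congr_deriv ?_
    ring

private lemma aux_iteratedDeriv {α : Type*} [MeasurableSpace α] (μ : Measure α) [IsFiniteMeasure μ]
    (c : α → ℂ) (hc : Measurable c) (Cc : ℝ) (m : ℕ) :
    ∀ v : α → ℂ, Measurable v → ∀ Cv : ℝ, (∀ᵐ a ∂μ, ‖v a‖ ≤ Cv ∧ ‖c a‖ ≤ Cc) → ∀ b : ℂ,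
    iteratedDeriv m (fun z => ∫ a, v a * Complex.exp (-(z * c a)) ∂μ) b
      = ∫ a, ((-(c a)) ^ m * v a) * Complex.exp (-(b * c a)) ∂μ := by
  induction m with
  | zero => intro v hv Cv hb b; simp
  | succ k ih =>
    intro v hv Cv hb b
    rw [iteratedDeriv_succ']
    have hder : (deriv fun z => ∫ a, v a * Complex.exp (-(z * c a)) ∂μ)
        = fun z => ∫ a, (-(c a) * v a) * Complex.exp (-(z * c a)) ∂μ := by
      funext z; exact (aux_hasDerivAt μ v c hv hc Cv Cc hb z).deriv
    rw [hder, ih (fun a => -(c a) * v a) (hc.neg.mul hv) (Cc * Cv) ?_ b]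
    · congr 1; funext a; ring
    · filter_upwards [hb] with a ha
      refine ⟨?_, ha.2⟩
      rw [norm_mul, norm_neg]
      exact mul_le_mul ha.2 ha.1 (norm_nonneg _) ((norm_nonneg _).trans ha.2)

private lemma fubini_helper (x : ℝ) (Uh : Measure ℝ) [SigmaFinite Uh]
    [IsFiniteMeasure (Uh.restrict (Icc (-x) 0))]
    (f : ℝ → ℝ → ℂ) (hf : Measurable (Function.uncurry f)) (C : ℝ)
    (hbound : ∀ y ∈ Icc (-x) (0:ℝ), ∀ u ∈ Icc (-x) (0:ℝ), ‖f y u‖ ≤ C) :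
    ∫ y in Icc (-x) (0:ℝ), ∫ u in Icc (-x) (0:ℝ), f y u ∂volume ∂Uh
      = ∫ p in (Icc (-x) (0:ℝ)) ×ˢ (Icc (-x) (0:ℝ)), f p.1 p.2 ∂(Uh.prod volume) := by
  rw [← Measure.prod_restrict]
  apply integral_integral
  refine integrable_of_bound hf.aestronglyMeasurable C ?_
  have : ((Uh.restrict (Icc (-x) 0)).prod (volume.restrict (Icc (-x) 0)))
      = (Uh.prod volume).restrict ((Icc (-x) (0:ℝ)) ×ˢ (Icc (-x) (0:ℝ))) :=
    Measure.prod_restrict _ _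
  rw [this]
  filter_upwards [ae_restrict_mem (measurableSet_Icc.prod measurableSet_Icc)] with p hp
  exact hbound p.1 hp.1 p.2 hp.2


private lemma integrable_cexp_restrict (Uh : Measure ℝ) (x : ℝ) (hx : 0 < x)
    [IsFiniteMeasure (Uh.restrict (Icc (-x) 0))] (a : ℂ) :
    Integrable (fun y : ℝ => Complex.exp (a * ↑y)) (Uh.restrict (Icc (-x) 0)) := by
  refine integrable_of_bound
    ((Complex.measurable_exp.comp
      (measurable_const.mul Complex.measurable_ofReal)).aestronglyMeasurable)
    (Real.exp (‖a‖ * x)) ?_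
  filter_upwards [ae_restrict_mem measurableSet_Icc] with y hy
  exact norm_cexp_mul_le
    (by rw [Complex.norm_real, Real.norm_eq_abs]; exact abs_le.2 ⟨hy.1, hy.2.trans hx.le⟩)


/-- Proposition 2.6 (1). For `x > 0` and `i`, the function
`m_i(x,·)` coincides off `-β_i` with the (entire) Laplace transform of the restriction
to `[-x,0]` of the convolution of `1_{[-x,0]}(u) u^{m_i} e^{-β_i u} du` with
`1_{[-x,0]}(y) Û(dy)`. -/
theorem statement4 {Ω : Type*} [MeasurableSpace Ω] {L : KilledLevy Ω} {A : AssumptionA L}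
    (W : WHNorm L A) (x : ℝ) (hx : 0 < x) (i : Fin W.m) :
    (∀ l : ℂ, l ≠ -W.β i →
      W.mfun x l i =
        ∫ y in Icc (-x) (0 : ℝ), (∫ u in Icc (-x) (0 : ℝ),
          (if -x ≤ u + y ∧ u + y ≤ 0 then
            Complex.exp (-l * (u + y)) * (u : ℂ) ^ (W.mi i) * Complex.exp (-W.β i * u)
          else 0)) ∂W.Uh) ∧
    Differentiable ℂ (fun l : ℂ =>
      ∫ y in Icc (-x) (0 : ℝ), (∫ u in Icc (-x) (0 : ℝ),
        (if -x ≤ u + y ∧ u + y ≤ 0 then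
          Complex.exp (-l * (u + y)) * (u : ℂ) ^ (W.mi i) * Complex.exp (-W.β i * u)
        else 0)) ∂W.Uh) := by
  
  classical
  haveI hsf := W.hUhsf
  haveI hfin : IsFiniteMeasure (W.Uh.restrict (Icc (-x) 0)) := by
    constructor
    rw [Measure.restrict_apply_univ]
    have hint := W.hUhint (-1) (by norm_num)
    refine lt_of_le_of_lt (measure_mono ?_) (hint.measure_norm_ge_lt_top (Real.exp_pos (-x)))
    intro y hy
    show Real.exp (-x) ≤ ‖Complex.exp (-(-1 : ℂ) * (y : ℝ))‖
    rw [show (-(-1 : ℂ) * (y : ℝ)) = ((y : ℝ) : ℂ) by ring,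
      Complex.norm_exp, Complex.ofReal_re]
    exact Real.exp_le_exp.2 hy.1
  set P : Measure (ℝ × ℝ) :=
    (W.Uh.prod volume).restrict ((Icc (-x) (0 : ℝ)) ×ˢ (Icc (-x) (0 : ℝ))) with hPdef
  haveI : IsFiniteMeasure P := by
    rw [hPdef, ← Measure.prod_restrict]; infer_instance
  have hcondm : MeasurableSet {p : ℝ × ℝ | -x ≤ p.2 + p.1 ∧ p.2 + p.1 ≤ 0} := by
    rw [Set.setOf_and]
    exact (measurableSet_le measurable_const (measurable_snd.add measurable_fst)).inter
      (measurableSet_le (measurable_snd.add measurable_fst) measurable_const)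
  have haeP : ∀ᵐ p ∂P, p.1 ∈ Icc (-x) (0 : ℝ) ∧ p.2 ∈ Icc (-x) (0 : ℝ) := by
    rw [hPdef]
    filter_upwards [ae_restrict_mem (measurableSet_Icc.prod measurableSet_Icc)] with p hp
    exact ⟨hp.1, hp.2⟩
  set w2 : ℝ × ℝ → ℂ := fun p =>
    if -x ≤ p.2 + p.1 ∧ p.2 + p.1 ≤ 0 then
      (p.2 : ℂ) ^ (W.mi i) * Complex.exp (-W.β i * (p.2 : ℝ)) else 0 with hw2
  set c2 : ℝ × ℝ → ℂ := fun p => ((p.2 : ℝ) : ℂ) + ((p.1 : ℝ) : ℂ) with hc2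
  have hmw2 : Measurable w2 := by
    rw [hw2]
    exact Measurable.ite hcondm
      (((Complex.measurable_ofReal.comp measurable_snd).pow_const _).mul
        (Complex.measurable_exp.comp
          (measurable_const.mul (Complex.measurable_ofReal.comp measurable_snd))))
      measurable_const
  have hmc2 : Measurable c2 := by
    rw [hc2]
    exact (Complex.measurable_ofReal.comp measurable_snd).add
      (Complex.measurable_ofReal.comp measurable_fst)
  have hbw2 : ∀ᵐ p ∂P,
      ‖w2 p‖ ≤ x ^ (W.mi i) * Real.exp (‖W.β i‖ * x) ∧ ‖c2 p‖ ≤ 2 * x := by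
    filter_upwards [haeP] with p hp
    have hu : |p.2| ≤ x := abs_le.2 ⟨hp.2.1, hp.2.2.trans hx.le⟩
    have hy : |p.1| ≤ x := abs_le.2 ⟨hp.1.1, hp.1.2.trans hx.le⟩
    constructor
    · simp only [hw2]
      split_ifs with h
      · rw [norm_mul, norm_pow, Complex.norm_real]
        have h1 : ‖p.2‖ ^ W.mi i ≤ x ^ W.mi i :=
          pow_le_pow_left₀ (norm_nonneg _) (by rwa [Real.norm_eq_abs]) _
        have h2 : ‖Complex.exp (-W.β i * (p.2 : ℝ))‖ ≤ Real.exp (‖W.β i‖ * x) := by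
          have := norm_cexp_mul_le (a := -W.β i) (z := ((p.2 : ℝ) : ℂ)) (r := x)
            (by rw [Complex.norm_real, Real.norm_eq_abs]; exact hu)
          rwa [norm_neg] at this
        exact mul_le_mul h1 h2 (norm_nonneg _) (by positivity)
      · rw [norm_zero]; positivity
    · simp only [hc2]
      calc ‖((p.2 : ℝ) : ℂ) + ((p.1 : ℝ) : ℂ)‖ ≤ ‖((p.2 : ℝ) : ℂ)‖ + ‖((p.1 : ℝ) : ℂ)‖ :=
            norm_add_le _ _
        _ ≤ 2 * x := by
            rw [Complex.norm_real, Complex.norm_real, Real.norm_eq_abs, Real.norm_eq_abs]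
            linarith
  have hFub : ∀ l : ℂ,
      (∫ y in Icc (-x) (0 : ℝ), (∫ u in Icc (-x) (0 : ℝ),
          (if -x ≤ u + y ∧ u + y ≤ 0 then
            Complex.exp (-l * (u + y)) * (u : ℂ) ^ (W.mi i) * Complex.exp (-W.β i * u)
          else 0)) ∂W.Uh)
        = ∫ p, w2 p * Complex.exp (-(l * c2 p)) ∂P := by
    intro l
    have hfm : Measurable (Function.uncurry (fun y u : ℝ =>
        if -x ≤ u + y ∧ u + y ≤ 0 then
          Complex.exp (-l * ((u : ℝ) + (y : ℝ) : ℂ)) * ((u : ℝ) : ℂ) ^ (W.mi i) *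
            Complex.exp (-W.β i * (u : ℝ)) else 0)) := by
      rw [Function.uncurry_def]
      refine Measurable.ite hcondm ?_ measurable_const
      fun_prop
    rw [fubini_helper x W.Uh _ hfm
      (Real.exp (‖l‖ * (2 * x)) * x ^ (W.mi i) * Real.exp (‖W.β i‖ * x)) ?_, ← hPdef]
    · refine integral_congr_ae (Eventually.of_forall fun p => ?_)
      simp only [hw2, hc2]
      split_ifs with h
      · rw [show (-(l * (((p.2 : ℝ) : ℂ) + ((p.1 : ℝ) : ℂ)))) =
          -l * (((p.2 : ℝ) : ℂ) + ((p.1 : ℝ) : ℂ)) by ring]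
        ring
      · rw [zero_mul]
    · intro y hy u hu
      have hau : |u| ≤ x := abs_le.2 ⟨hu.1, hu.2.trans hx.le⟩
      have hay : |y| ≤ x := abs_le.2 ⟨hy.1, hy.2.trans hx.le⟩
      split_ifs with h
      · rw [norm_mul, norm_mul]
        have h1 : ‖Complex.exp (-l * ((u : ℝ) + (y : ℝ) : ℂ))‖ ≤ Real.exp (‖l‖ * (2 * x)) := by
          have := norm_cexp_mul_le (a := -l) (z := ((u : ℝ) + (y : ℝ) : ℂ)) (r := 2 * x)
            (by rw [show ((u : ℝ) + (y : ℝ) : ℂ) = (((u + y : ℝ)) : ℂ) by push_cast; ring,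
                  Complex.norm_real, Real.norm_eq_abs]
                calc |u + y| ≤ |u| + |y| := abs_add_le _ _
                  _ ≤ 2 * x := by linarith)
          rwa [norm_neg] at this
        have h2 : ‖((u : ℝ) : ℂ) ^ (W.mi i)‖ ≤ x ^ (W.mi i) := by
          rw [norm_pow, Complex.norm_real, Real.norm_eq_abs]
          exact pow_le_pow_left₀ (abs_nonneg _) hau _
        have h3 : ‖Complex.exp (-W.β i * (u : ℝ))‖ ≤ Real.exp (‖W.β i‖ * x) := by
          have := norm_cexp_mul_le (a := -W.β i) (z := ((u : ℝ) : ℂ)) (r := x)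
            (by rw [Complex.norm_real, Real.norm_eq_abs]; exact hau)
          rwa [norm_neg] at this
        exact mul_le_mul (mul_le_mul h1 h2 (norm_nonneg _) (by positivity)) h3
          (norm_nonneg _) (by positivity)
      · rw [norm_zero]; positivity
  constructor
  · intro l hl
    have hβl : W.β i ≠ -l := fun h => hl (by rw [h, neg_neg])
    set w0 : ℝ × ℝ → ℂ := fun p =>
      if -x ≤ p.2 + p.1 ∧ p.2 + p.1 ≤ 0 then
        Complex.exp (-l * (((p.2 : ℝ) : ℂ) + ((p.1 : ℝ) : ℂ))) else 0 with hw0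
    set c0 : ℝ × ℝ → ℂ := fun p => ((p.2 : ℝ) : ℂ) with hc0
    have hmw0 : Measurable w0 := by
      rw [hw0]
      refine Measurable.ite hcondm ?_ measurable_const
      fun_prop
    have hmc0 : Measurable c0 := by
      rw [hc0]; exact Complex.measurable_ofReal.comp measurable_snd
    have hbw0 : ∀ᵐ p ∂P, ‖w0 p‖ ≤ Real.exp (‖l‖ * x) ∧ ‖c0 p‖ ≤ x := by
      filter_upwards [haeP] with p hp
      have hu : |p.2| ≤ x := abs_le.2 ⟨hp.2.1, hp.2.2.trans hx.le⟩
      constructor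
      · simp only [hw0]
        split_ifs with h
        · have := norm_cexp_mul_le (a := -l) (z := (((p.2 : ℝ) : ℂ) + ((p.1 : ℝ) : ℂ))) (r := x)
            (by rw [show (((p.2 : ℝ) : ℂ) + ((p.1 : ℝ) : ℂ)) = (((p.2 + p.1 : ℝ)) : ℂ) by
                  push_cast; ring, Complex.norm_real, Real.norm_eq_abs]
                exact abs_le.2 ⟨h.1, h.2.trans hx.le⟩)
          rwa [norm_neg] at this
        · rw [norm_zero]; positivity
      · simp only [hc0]
        rw [Complex.norm_real, Real.norm_eq_abs]
        exact hu
    have key : ∀ b : ℂ, b ≠ -l →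
        (Complex.exp ((l + b) * (x : ℝ)) * W.UB x (-b) - W.UB x l) / (l + b)
          = ∫ p, w0 p * Complex.exp (-(b * c0 p)) ∂P := by
      intro b hb
      have hlb : l + b ≠ 0 := by
        intro h
        exact hb (by rw [eq_neg_of_add_eq_zero_right h])
      -- Fubini for the w0 integrand
      have hG : (∫ y in Icc (-x) (0 : ℝ), (∫ u in Icc (-x) (0 : ℝ),
            (if -x ≤ u + y ∧ u + y ≤ 0 then
              Complex.exp (-l * (((u : ℝ) : ℂ) + ((y : ℝ) : ℂ))) else 0)
              * Complex.exp (-(b * ((u : ℝ) : ℂ)))) ∂W.Uh)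
          = ∫ p, w0 p * Complex.exp (-(b * c0 p)) ∂P := by
        have hfm0 : Measurable (Function.uncurry (fun y u : ℝ =>
            (if -x ≤ u + y ∧ u + y ≤ 0 then
              Complex.exp (-l * (((u : ℝ) : ℂ) + ((y : ℝ) : ℂ))) else 0)
              * Complex.exp (-(b * ((u : ℝ) : ℂ))))) := by
          rw [Function.uncurry_def]
          refine Measurable.mul (Measurable.ite hcondm ?_ measurable_const) ?_ <;> fun_prop
        rw [fubini_helper x W.Uh _ hfm0 (Real.exp (‖l‖ * x) * Real.exp (‖b‖ * x)) ?hb0, ← hPdef]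
        case hb0 =>
          intro y hy u hu
          have hau : |u| ≤ x := abs_le.2 ⟨hu.1, hu.2.trans hx.le⟩
          rw [norm_mul]
          have h2 : ‖Complex.exp (-(b * ((u : ℝ) : ℂ)))‖ ≤ Real.exp (‖b‖ * x) := by
            refine (norm_cexp_le _).trans (Real.exp_le_exp.2 ?_)
            rw [norm_neg, norm_mul, Complex.norm_real, Real.norm_eq_abs]
            exact mul_le_mul_of_nonneg_left hau (norm_nonneg b)
          have h1 : ‖(if -x ≤ u + y ∧ u + y ≤ 0 then
              Complex.exp (-l * (((u : ℝ) : ℂ) + ((y : ℝ) : ℂ))) else 0)‖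
              ≤ Real.exp (‖l‖ * x) := by
            split_ifs with h
            · have := norm_cexp_mul_le (a := -l) (z := (((u : ℝ) : ℂ) + ((y : ℝ) : ℂ))) (r := x)
                (by rw [show (((u : ℝ) : ℂ) + ((y : ℝ) : ℂ)) = (((u + y : ℝ)) : ℂ) by
                      push_cast; ring, Complex.norm_real, Real.norm_eq_abs]
                    exact abs_le.2 ⟨h.1, h.2.trans hx.le⟩)
              rwa [norm_neg] at this
            · rw [norm_zero]; positivity
          exact mul_le_mul h1 h2 (norm_nonneg _) (Real.exp_pos _).le
      -- inner integral computation
      have hinner : ∀ y ∈ Icc (-x) (0 : ℝ),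
          (∫ u in Icc (-x) (0 : ℝ),
            (if -x ≤ u + y ∧ u + y ≤ 0 then
              Complex.exp (-l * (((u : ℝ) : ℂ) + ((y : ℝ) : ℂ))) else 0)
              * Complex.exp (-(b * ((u : ℝ) : ℂ))))
          = (Complex.exp ((l + b) * (x : ℝ)) * Complex.exp (b * (y : ℝ))
              - Complex.exp (-l * (y : ℝ))) / (l + b) := by
        intro y hy
        have h1 : ∀ u : ℝ,
            (if -x ≤ u + y ∧ u + y ≤ 0 then
              Complex.exp (-l * (((u : ℝ) : ℂ) + ((y : ℝ) : ℂ))) else 0)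
              * Complex.exp (-(b * ((u : ℝ) : ℂ)))
            = (Icc (-x - y) (-y)).indicator
                (fun u : ℝ => Complex.exp (-l * (y : ℝ)) * Complex.exp (-(l + b) * (u : ℝ))) u := by
          intro u
          by_cases h : -x ≤ u + y ∧ u + y ≤ 0
          · have hmem : u ∈ Icc (-x - y) (-y) := ⟨by linarith [h.1], by linarith [h.2]⟩
            rw [if_pos h, Set.indicator_of_mem hmem, ← Complex.exp_add, ← Complex.exp_add]
            congr 1
            push_cast
            ring
          · have hmem : u ∉ Icc (-x - y) (-y) := by
              rw [mem_Icc]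
              intro hc
              exact h ⟨by linarith [hc.1], by linarith [hc.2]⟩
            rw [if_neg h, Set.indicator_of_notMem hmem, zero_mul]
        simp only [h1]
        rw [setIntegral_indicator measurableSet_Icc]
        rw [show Icc (-x) (0 : ℝ) ∩ Icc (-x - y) (-y) = Icc (-x - y) (0 : ℝ) by
          rw [Icc_inter_Icc, max_eq_right (by linarith [hy.2] : -x ≤ -x - y),
            min_eq_left (by linarith [hy.2] : (0 : ℝ) ≤ -y)]]
        rw [MeasureTheory.integral_const_mul, integral_Icc_eq_integral_Ioc,
          ← intervalIntegral.integral_of_le (by linarith [hy.1] : -x - y ≤ (0 : ℝ)),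
          integral_exp_mul_complex (neg_ne_zero.2 hlb)]
        have key2 : Complex.exp (-l * (y : ℝ)) * Complex.exp (-(l + b) * ((-x - y : ℝ) : ℂ))
            = Complex.exp ((l + b) * (x : ℝ)) * Complex.exp (b * (y : ℝ)) := by
          rw [← Complex.exp_add, ← Complex.exp_add]
          congr 1
          push_cast
          ring
        simp only [Complex.ofReal_zero, mul_zero, Complex.exp_zero]
        rw [div_neg, mul_neg, ← mul_div_assoc, ← neg_div]
        congr 1
        rw [← key2]
        ring
      -- F side
      have hF : (Complex.exp ((l + b) * (x : ℝ)) * W.UB x (-b) - W.UB x l) / (l + b)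
          = ∫ y in Icc (-x) (0 : ℝ),
              (Complex.exp ((l + b) * (x : ℝ)) * Complex.exp (b * (y : ℝ))
                - Complex.exp (-l * (y : ℝ))) / (l + b) ∂W.Uh := by
        have hub : W.UB x (-b) = ∫ y in Icc (-x) (0 : ℝ), Complex.exp (b * (y : ℝ)) ∂W.Uh := by
          rw [WHNorm.UB]
          refine integral_congr_ae (Eventually.of_forall fun y => ?_)
          show Complex.exp (-(-b) * (y : ℝ)) = Complex.exp (b * (y : ℝ))
          rw [neg_neg]
        rw [hub, WHNorm.UB, ← MeasureTheory.integral_const_mul,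
          ← integral_sub ((integrable_cexp_restrict W.Uh x hx b).const_mul _)
            (integrable_cexp_restrict W.Uh x hx (-l)), ← integral_div]
      rw [hF, ← hG]
      refine integral_congr_ae ?_
      filter_upwards [ae_restrict_mem measurableSet_Icc] with y hy
      exact (hinner y hy).symm
    have hchain : W.mfun x l i = ∫ p, w2 p * Complex.exp (-(l * c2 p)) ∂P := by
      rw [WHNorm.mfun]
      have hev : (fun b => (Complex.exp ((l + b) * (x : ℝ)) * W.UB x (-b) - W.UB x l) / (l + b))
          =ᶠ[nhds (W.β i)] (fun b => ∫ p, w0 p * Complex.exp (-(b * c0 p)) ∂P) :=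
        eventuallyEq_of_mem (isOpen_ne.mem_nhds hβl) (fun b hb => key b hb)
      rw [hev.iteratedDeriv_eq (W.mi i),
        aux_iteratedDeriv P c0 hmc0 x (W.mi i) w0 hmw0 (Real.exp (‖l‖ * x)) hbw0 (W.β i),
        ← MeasureTheory.integral_const_mul]
      refine integral_congr_ae (Eventually.of_forall fun p => ?_)
      simp only [hw0, hw2, hc0, hc2]
      split_ifs with h
      · simp only [neg_mul]
        have hpow : ((-1 : ℂ)) ^ (W.mi i) * (-((p.2 : ℝ) : ℂ)) ^ (W.mi i)
            = (((p.2 : ℝ)) : ℂ) ^ (W.mi i) := by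
          rw [← mul_pow, neg_mul_neg, one_mul]
        linear_combination (Complex.exp (-(l * (((p.2 : ℝ) : ℂ) + ((p.1 : ℝ) : ℂ)))) *
          Complex.exp (-(W.β i * ((p.2 : ℝ) : ℂ)))) * hpow
      · simp
    exact hchain.trans (hFub l).symm
  · have heq : (fun l : ℂ =>
        ∫ y in Icc (-x) (0 : ℝ), (∫ u in Icc (-x) (0 : ℝ),
          (if -x ≤ u + y ∧ u + y ≤ 0 then
            Complex.exp (-l * (u + y)) * (u : ℂ) ^ (W.mi i) * Complex.exp (-W.β i * u)
          else 0)) ∂W.Uh)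
        = fun l : ℂ => ∫ p, w2 p * Complex.exp (-(l * c2 p)) ∂P := funext fun l => hFub l
    rw [heq]
    exact fun l => (aux_hasDerivAt P w2 c2 hmw2 hmc2 _ _ hbw2 l).differentiableAt
end
end

section
/- For every x > 0, every j ∈ {1,…,n} and every λ with Re λ < 0 and λ ≠ -γ_j, the quantity n_j(x,λ) := (∂^{n_j}/(-∂γ)^{n_j})[ (e^{-λx} Û_{(-∞,-x)}(λ) - e^{γx} Û_{(-∞,-x)}(-γ)) / (λ+γ) ] evaluated at γ = γ_j equals ∫_{(-∞,0)} e^{-λz} ν_j(dz), where ν_j is the restriction to (-∞,0) of the convolution of the measure y^{n_j} e^{-γ_j y} 1_{y>0} dy with the restriction to (-∞,0) of the shift by +x of the measure 1_{(-∞,-x)}(y) Û(dy) (i.e. the measure B ↦ Û((B - x) ∩ (-∞,-x))). -/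
open MeasureTheory ProbabilityTheory Filter Set Complex
open scoped ENNReal NNReal

noncomputable section

namespace S5

open MeasureTheory Set

lemma pow_le_fac_mul_exp (t : ℝ) (ht : 0 ≤ t) (n : ℕ) : t ^ n ≤ n.factorial * Real.exp t := by
  have h := Real.sum_le_exp_of_nonneg ht (n + 1)
  have h1 : t ^ n / n.factorial ≤ ∑ i ∈ Finset.range (n + 1), t ^ i / i.factorial :=
    Finset.single_le_sum (f := fun i => t ^ i / (i.factorial : ℝ))
      (fun i _ => by positivity) (Finset.self_mem_range_succ n)
  have hf : (0 : ℝ) < n.factorial := by positivity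
  calc t ^ n = t ^ n / n.factorial * n.factorial := by field_simp
    _ ≤ Real.exp t * n.factorial := mul_le_mul_of_nonneg_right (h1.trans h) hf.le
    _ = n.factorial * Real.exp t := mul_comm _ _

/-- the inner integrand -/
noncomputable def itg (x : ℝ) (l : ℂ) (n : ℕ) (g : ℂ) (y u : ℝ) : ℂ :=
  if u + (y + x) < 0 then
    Complex.exp (-l * (u + (y + x))) * (u : ℂ) ^ n * Complex.exp (-g * u)
  else 0

/-- the inner integral -/
noncomputable def fI (x : ℝ) (l : ℂ) (n : ℕ) (g : ℂ) (y : ℝ) : ℂ :=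
  ∫ u in Ioi (0 : ℝ), itg x l n g y u

lemma norm_itg_le (x : ℝ) (l : ℂ) (hl : l.re < 0) (n : ℕ) {δ : ℝ} (hδ : 0 < δ) {g : ℂ}
    (hg : δ ≤ g.re) (y : ℝ) {u : ℝ} (hu : 0 ≤ u) :
    ‖itg x l n g y u‖ ≤ Real.exp (min (-l.re) (δ / 2) * (y + x)) *
      ((n.factorial : ℝ) * (4 / δ) ^ n) * Real.exp (-(δ / 4) * u) := by
  set s : ℝ := min (-l.re) (δ / 2) with hs
  have hs0 : 0 < s := lt_min (by linarith) (by linarith)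
  have hs1 : s ≤ -l.re := min_le_left _ _
  have hs2 : s ≤ δ / 2 := min_le_right _ _
  rw [itg]
  split_ifs with h
  · have hC : (0:ℝ) ≤ (n.factorial : ℝ) * (4 / δ) ^ n := by positivity
    simp only [norm_mul, norm_pow, Complex.norm_exp,
      Complex.norm_real, Real.norm_eq_abs, _root_.abs_of_nonneg hu]
    have hre1 : (-l * ((u : ℂ) + ((y : ℂ) + (x : ℂ)))).re = -l.re * (u + (y + x)) := by
      have hcast : ((u : ℂ) + ((y : ℂ) + (x : ℂ))) = ((u + (y + x) : ℝ) : ℂ) := by push_cast; ring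
      rw [hcast, mul_comm, Complex.re_ofReal_mul]
      simp [Complex.neg_re]
      ring
    have hre2 : (-g * (u : ℂ)).re = -g.re * u := by
      rw [mul_comm, Complex.re_ofReal_mul]
      simp [Complex.neg_re]
      ring
    rw [hre1, hre2]
    have h1 : Real.exp (-l.re * (u + (y + x))) ≤ Real.exp (s * (y + x) + s * u) := by
      apply Real.exp_le_exp.2
      have := mul_le_mul_of_nonpos_right hs1 h.le
      linarith [this]
    have h2 : u ^ n ≤ (n.factorial : ℝ) * (4 / δ) ^ n * Real.exp (δ / 4 * u) := by
      have hp := pow_le_fac_mul_exp (δ / 4 * u) (by positivity) n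
      have hu' : u ^ n = (4 / δ) ^ n * (δ / 4 * u) ^ n := by
        rw [← mul_pow]
        congr 1
        field_simp
      rw [hu']
      calc (4 / δ) ^ n * (δ / 4 * u) ^ n ≤ (4 / δ) ^ n * ((n.factorial : ℝ) * Real.exp (δ / 4 * u)) := by
            apply mul_le_mul_of_nonneg_left hp (by positivity)
        _ = (n.factorial : ℝ) * (4 / δ) ^ n * Real.exp (δ / 4 * u) := by ring
    have h3 : Real.exp (-g.re * u) ≤ Real.exp (-δ * u) := by
      apply Real.exp_le_exp.2
      nlinarith [mul_le_mul_of_nonneg_right hg hu]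
    calc Real.exp (-l.re * (u + (y + x))) * u ^ n * Real.exp (-g.re * u)
        ≤ Real.exp (s * (y + x) + s * u) *
            ((n.factorial : ℝ) * (4 / δ) ^ n * Real.exp (δ / 4 * u)) * Real.exp (-δ * u) := by
          apply mul_le_mul _ h3 (Real.exp_nonneg _) ?_
          · exact mul_le_mul h1 h2 (by positivity) (Real.exp_nonneg _)
          · positivity
      _ = (n.factorial : ℝ) * (4 / δ) ^ n *
            (Real.exp (s * (y + x) + s * u) * Real.exp (δ / 4 * u) * Real.exp (-δ * u)) := by
          ring
      _ = (n.factorial : ℝ) * (4 / δ) ^ n *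
            Real.exp ((s * (y + x) + s * u) + (δ / 4 * u) + (-δ * u)) := by
          rw [← Real.exp_add, ← Real.exp_add]
      _ ≤ (n.factorial : ℝ) * (4 / δ) ^ n * Real.exp (s * (y + x) + -(δ / 4) * u) := by
          apply mul_le_mul_of_nonneg_left _ hC
          apply Real.exp_le_exp.2
          nlinarith [mul_le_mul_of_nonneg_right hs2 hu]
      _ = (n.factorial : ℝ) * (4 / δ) ^ n *
            (Real.exp (s * (y + x)) * Real.exp (-(δ / 4) * u)) := by
          rw [← Real.exp_add]
      _ = Real.exp (s * (y + x)) * ((n.factorial : ℝ) * (4 / δ) ^ n) *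
            Real.exp (-(δ / 4) * u) := by
          ring
  · simp only [norm_zero]
    positivity

lemma meas_itg (x : ℝ) (l : ℂ) (n : ℕ) (g : ℂ) :
    Measurable (Function.uncurry (itg x l n g)) := by
  unfold itg Function.uncurry
  apply Measurable.ite
  · exact measurableSet_lt (by fun_prop) measurable_const
  · fun_prop
  · exact measurable_const

lemma sm_fI (x : ℝ) (l : ℂ) (n : ℕ) (g : ℂ) : StronglyMeasurable (fI x l n g) := by
  unfold fI
  exact (meas_itg x l n g).stronglyMeasurable.integral_prod_right

lemma int_itg (x : ℝ) (l : ℂ) (hl : l.re < 0) (n : ℕ) {g : ℂ} (hg : 0 < g.re) (y : ℝ) :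
    Integrable (itg x l n g y) (volume.restrict (Ioi 0)) := by
  apply Integrable.mono'
      (g := fun u => Real.exp (min (-l.re) (g.re / 2) * (y + x)) *
        ((n.factorial : ℝ) * (4 / g.re) ^ n) * Real.exp (-(g.re / 4) * u))
  · exact (exp_neg_integrableOn_Ioi 0 (by linarith)).const_mul _
  · exact ((meas_itg x l n g).of_uncurry_left).aestronglyMeasurable
  · refine (ae_restrict_iff' measurableSet_Ioi).2 (Filter.Eventually.of_forall fun u hu => ?_)
    exact norm_itg_le x l hl n (δ := g.re) hg le_rfl y (le_of_lt hu)

lemma norm_fI_le (x : ℝ) (l : ℂ) (hl : l.re < 0) (n : ℕ) {δ : ℝ} (hδ : 0 < δ) {g : ℂ}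
    (hg : δ ≤ g.re) (y : ℝ) :
    ‖fI x l n g y‖ ≤ Real.exp (min (-l.re) (δ / 2) * (y + x)) *
      ((n.factorial : ℝ) * (4 / δ) ^ n * ∫ u in Ioi (0 : ℝ), Real.exp (-(δ / 4) * u)) := by
  unfold fI
  have h := norm_integral_le_of_norm_le
      (f := fun u => itg x l n g y u)
      (g := fun u => Real.exp (min (-l.re) (δ / 2) * (y + x)) *
        ((n.factorial : ℝ) * (4 / δ) ^ n) * Real.exp (-(δ / 4) * u))
      ((exp_neg_integrableOn_Ioi 0 (by positivity)).const_mul _)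
      ((ae_restrict_iff' measurableSet_Ioi).2
        (Filter.Eventually.of_forall fun u hu => norm_itg_le x l hl n hδ hg y hu.le))
  refine h.trans_eq ?_
  rw [integral_const_mul, mul_assoc]

lemma re_ge_of_ball {g₀ g : ℂ} (hg : 0 < g₀.re) (h : g ∈ Metric.ball g₀ (g₀.re / 2)) :
    g₀.re / 2 ≤ g.re := by
  have h1 : |(g - g₀).re| ≤ ‖g - g₀‖ := Complex.abs_re_le_norm _
  have h2 : ‖g - g₀‖ < g₀.re / 2 := by
    rwa [Metric.mem_ball, Complex.dist_eq] at h
  have h3 : |g.re - g₀.re| < g₀.re / 2 := by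
    have := lt_of_le_of_lt h1 h2
    simpa [Complex.sub_re] using this
  have := abs_lt.1 h3
  linarith [this.1]

lemma hasDerivAt_fI (x : ℝ) (l : ℂ) (hl : l.re < 0) (n : ℕ) (y : ℝ) {g₀ : ℂ}
    (hg : 0 < g₀.re) :
    HasDerivAt (fun g => fI x l n g y) (-(fI x l (n + 1) g₀ y)) g₀ := by
  set δ : ℝ := g₀.re / 2 with hδdef
  have hδ : 0 < δ := half_pos hg
  have key := hasDerivAt_integral_of_dominated_loc_of_deriv_le
    (μ := volume.restrict (Ioi 0)) (F := fun g u => itg x l n g y u)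
    (F' := fun (g : ℂ) u => -(itg x l (n + 1) g y u)) (x₀ := g₀) (s := Metric.ball g₀ δ)
    (bound := fun u => Real.exp (min (-l.re) (δ / 2) * (y + x)) *
      (((n + 1).factorial : ℝ) * (4 / δ) ^ (n + 1)) * Real.exp (-(δ / 4) * u))
    (Metric.ball_mem_nhds g₀ hδ)
    (Filter.Eventually.of_forall fun g =>
      ((meas_itg x l n g).of_uncurry_left).aestronglyMeasurable)
    (int_itg x l hl n hg y)
    (((meas_itg x l (n + 1) g₀).of_uncurry_left).aestronglyMeasurable.neg)
    ((ae_restrict_iff' measurableSet_Ioi).2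
      (Filter.Eventually.of_forall fun u hu g hgball => by
        rw [norm_neg]
        exact norm_itg_le x l hl (n + 1) hδ (re_ge_of_ball hg hgball) y hu.le))
    ((exp_neg_integrableOn_Ioi 0 (by linarith)).const_mul _)
    ((ae_restrict_iff' measurableSet_Ioi).2
      (Filter.Eventually.of_forall fun u hu g hgball => by
        show HasDerivAt (fun g' : ℂ => itg x l n g' y u) (-(itg x l (n + 1) g y u)) g
        by_cases h : u + (y + x) < 0
        · have h1 : HasDerivAt (fun g : ℂ => -g * (u : ℂ)) (-(u : ℂ)) g := by
            simpa using ((hasDerivAt_id g).neg.mul_const ((u : ℂ)))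
          have h2 := (h1.cexp).const_mul
            (Complex.exp (-l * ((u : ℂ) + ((y : ℂ) + (x : ℂ)))) * (u : ℂ) ^ n)
          have e1 : (fun g : ℂ => itg x l n g y u) = fun g : ℂ =>
              Complex.exp (-l * ((u : ℂ) + ((y : ℂ) + (x : ℂ)))) * (u : ℂ) ^ n *
                Complex.exp (-g * (u : ℂ)) := by
            funext g'
            unfold itg
            rw [if_pos h]
          have e2 : -(itg x l (n + 1) g y u) =
              Complex.exp (-l * ((u : ℂ) + ((y : ℂ) + (x : ℂ)))) * (u : ℂ) ^ n *
                (Complex.exp (-g * (u : ℂ)) * -(u : ℂ)) := by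
            unfold itg
            rw [if_pos h, pow_succ]
            ring
          rw [e1, e2]
          exact h2
        · have e1 : (fun g : ℂ => itg x l n g y u) = fun _ : ℂ => 0 := by
            funext g'
            unfold itg
            rw [if_neg h]
          have e2 : -(itg x l (n + 1) g y u) = 0 := by
            unfold itg
            rw [if_neg h]
            ring
          rw [e1, e2]
          exact hasDerivAt_const g 0))
  have h2 := key.2
  rw [integral_neg] at h2
  exact h2

lemma int_bnd (x : ℝ) (l : ℂ) (Uh : Measure ℝ)
    (hUhint : ∀ lc : ℂ, lc.re < 0 → Integrable (fun y : ℝ => Complex.exp (-lc * y)) Uh)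
    (hl : l.re < 0) {δ : ℝ} (hδ : 0 < δ) (c : ℝ) :
    Integrable (fun y => Real.exp (min (-l.re) (δ / 2) * (y + x)) * c)
      (Uh.restrict (Iio (-x))) := by
  set s : ℝ := min (-l.re) (δ / 2) with hs
  have hs0 : 0 < s := lt_min (by linarith) (by linarith)
  have h1 : Integrable (fun y : ℝ => Complex.exp (-(-(s : ℂ)) * y)) Uh :=
    hUhint (-(s : ℂ)) (by simpa using hs0)
  have h2 := (h1.norm.restrict (s := Iio (-x))).mul_const (Real.exp (s * x) * c)
  refine h2.congr (Filter.Eventually.of_forall fun y => ?_)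
  dsimp only
  have hn : ‖Complex.exp (-(-(s : ℂ)) * (y : ℂ))‖ = Real.exp (s * y) := by
    rw [Complex.norm_exp]
    have : (-(-(s : ℂ)) * (y : ℂ)) = ((s * y : ℝ) : ℂ) := by push_cast; ring
    rw [this, Complex.ofReal_re]
  rw [hn, show s * (y + x) = s * y + s * x by ring, Real.exp_add]
  ring

lemma int_fI (x : ℝ) (l : ℂ) (Uh : Measure ℝ)
    (hUhint : ∀ lc : ℂ, lc.re < 0 → Integrable (fun y : ℝ => Complex.exp (-lc * y)) Uh)
    (hl : l.re < 0) (n : ℕ) {g : ℂ} (hg : 0 < g.re) :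
    Integrable (fI x l n g) (Uh.restrict (Iio (-x))) := by
  apply Integrable.mono'
      (int_bnd x l Uh hUhint hl hg
        ((n.factorial : ℝ) * (4 / g.re) ^ n * ∫ u in Ioi (0 : ℝ), Real.exp (-(g.re / 4) * u)))
      (sm_fI x l n g).aestronglyMeasurable
  exact Filter.Eventually.of_forall fun y => norm_fI_le x l hl n hg le_rfl y

lemma hasDerivAt_G (x : ℝ) (l : ℂ) (Uh : Measure ℝ)
    (hUhint : ∀ lc : ℂ, lc.re < 0 → Integrable (fun y : ℝ => Complex.exp (-lc * y)) Uh)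
    (hl : l.re < 0) (n : ℕ) {g₀ : ℂ} (hg : 0 < g₀.re) :
    HasDerivAt (fun g => ∫ y in Iio (-x), fI x l n g y ∂Uh)
      (-(∫ y in Iio (-x), fI x l (n + 1) g₀ y ∂Uh)) g₀ := by
  set δ : ℝ := g₀.re / 2 with hδdef
  have hδ : 0 < δ := half_pos hg
  have hbint : Integrable
      (fun y => Real.exp (min (-l.re) (δ / 2) * (y + x)) *
        (((n + 1).factorial : ℝ) * (4 / δ) ^ (n + 1) *
          ∫ u in Ioi (0 : ℝ), Real.exp (-(δ / 4) * u))) (Uh.restrict (Iio (-x))) :=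
    int_bnd x l Uh hUhint hl hδ _
  have key := hasDerivAt_integral_of_dominated_loc_of_deriv_le
    (μ := Uh.restrict (Iio (-x))) (F := fun g y => fI x l n g y)
    (F' := fun (g : ℂ) y => -(fI x l (n + 1) g y)) (x₀ := g₀) (s := Metric.ball g₀ δ)
    (bound := fun y => Real.exp (min (-l.re) (δ / 2) * (y + x)) *
      (((n + 1).factorial : ℝ) * (4 / δ) ^ (n + 1) *
        ∫ u in Ioi (0 : ℝ), Real.exp (-(δ / 4) * u)))
    (Metric.ball_mem_nhds g₀ hδ)
    (Filter.Eventually.of_forall fun g => (sm_fI x l n g).aestronglyMeasurable)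
    (int_fI x l Uh hUhint hl n hg)
    ((sm_fI x l (n + 1) g₀).aestronglyMeasurable.neg)
    (Filter.Eventually.of_forall fun y g hgball => by
      rw [norm_neg]
      exact norm_fI_le x l hl (n + 1) hδ (re_ge_of_ball hg hgball) y)
    hbint
    (Filter.Eventually.of_forall fun y g hgball =>
      hasDerivAt_fI x l hl n y (lt_of_lt_of_le hδ (re_ge_of_ball hg hgball)))
  have h2 := key.2
  rw [integral_neg] at h2
  exact h2

lemma iter_G (x : ℝ) (l : ℂ) (Uh : Measure ℝ)
    (hUhint : ∀ lc : ℂ, lc.re < 0 → Integrable (fun y : ℝ => Complex.exp (-lc * y)) Uh)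
    (hl : l.re < 0) :
    ∀ (k : ℕ) (g : ℂ), 0 < g.re →
      iteratedDeriv k (fun g' => ∫ y in Iio (-x), fI x l 0 g' y ∂Uh) g =
        (-1 : ℂ) ^ k * ∫ y in Iio (-x), fI x l k g y ∂Uh := by
  intro k
  induction k with
  | zero => intro g hg; simp [iteratedDeriv_zero]
  | succ k ih =>
    intro g hg
    rw [iteratedDeriv_succ]
    have hev : iteratedDeriv k (fun g' => ∫ y in Iio (-x), fI x l 0 g' y ∂Uh)
        =ᶠ[nhds g] fun h => (-1 : ℂ) ^ k * ∫ y in Iio (-x), fI x l k h y ∂Uh := by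
      filter_upwards [(isOpen_lt continuous_const Complex.continuous_re).mem_nhds hg] with h hh
      exact ih h hh
    rw [hev.deriv_eq]
    have hd := (hasDerivAt_G x l Uh hUhint hl k hg).const_mul ((-1 : ℂ) ^ k)
    rw [hd.deriv, pow_succ]
    ring

lemma iteratedDeriv_congr_ev {f g : ℂ → ℂ} {z : ℂ} (h : f =ᶠ[nhds z] g) (n : ℕ) :
    iteratedDeriv n f z = iteratedDeriv n g z := by
  have hall : ∀ n, iteratedDeriv n f =ᶠ[nhds z] iteratedDeriv n g := by
    intro n
    induction n with
    | zero => simpa [iteratedDeriv_zero] using h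
    | succ n ih =>
      simp only [iteratedDeriv_succ]
      exact ih.deriv
  exact (hall n).eq_of_nhds

lemma fI_zero (x : ℝ) (l : ℂ) (hl : l.re < 0) {g : ℂ} (hlg : l + g ≠ 0) {y : ℝ}
    (hy : y < -x) :
    fI x l 0 g y = (Complex.exp (-l * ((y : ℂ) + (x : ℂ))) -
      Complex.exp (g * ((y : ℂ) + (x : ℂ)))) / (l + g) := by
  have ha : (0 : ℝ) ≤ -(y + x) := by linarith
  have hne' : -(l + g) ≠ 0 := neg_ne_zero.2 hlg
  unfold fI
  have heq : ∀ u : ℝ, itg x l 0 g y u =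
      (Iio (-(y + x))).indicator
        (fun u : ℝ => Complex.exp (-l * ((y : ℂ) + (x : ℂ))) *
          Complex.exp (-(l + g) * u)) u := by
    intro u
    rw [itg, Set.indicator_apply]
    by_cases h : u + (y + x) < 0
    · rw [if_pos h, if_pos (by simp only [mem_Iio]; linarith), pow_zero, mul_one,
        ← Complex.exp_add, ← Complex.exp_add]
      congr 1
      push_cast
      ring
    · rw [if_neg h, if_neg (by simp only [mem_Iio]; intro hh; exact h (by linarith))]
  simp_rw [heq]
  rw [setIntegral_indicator measurableSet_Iio, Ioi_inter_Iio,
    ← integral_Ioc_eq_integral_Ioo, ← intervalIntegral.integral_of_le ha,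
    intervalIntegral.integral_const_mul, integral_exp_mul_complex hne']
  have hkey : Complex.exp (-l * ((y : ℂ) + (x : ℂ))) *
      Complex.exp (-(l + g) * ((-(y + x) : ℝ) : ℂ)) =
      Complex.exp (g * ((y : ℂ) + (x : ℂ))) := by
    rw [← Complex.exp_add]
    congr 1
    push_cast
    ring
  have hzero : Complex.exp (-(l + g) * ((0 : ℝ) : ℂ)) = 1 := by
    simp
  rw [hzero]
  calc Complex.exp (-l * ((y : ℂ) + (x : ℂ))) *
        ((Complex.exp (-(l + g) * ((-(y + x) : ℝ) : ℂ)) - 1) / -(l + g))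
      = (Complex.exp (-l * ((y : ℂ) + (x : ℂ))) *
          Complex.exp (-(l + g) * ((-(y + x) : ℝ) : ℂ)) -
          Complex.exp (-l * ((y : ℂ) + (x : ℂ)))) / -(l + g) := by ring
    _ = (Complex.exp (g * ((y : ℂ) + (x : ℂ))) -
          Complex.exp (-l * ((y : ℂ) + (x : ℂ)))) / -(l + g) := by rw [hkey]
    _ = (Complex.exp (-l * ((y : ℂ) + (x : ℂ))) -
          Complex.exp (g * ((y : ℂ) + (x : ℂ)))) / (l + g) := by
        rw [div_neg, ← neg_div, neg_sub]

end S5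

section S5main

open MeasureTheory Set

variable {Ω : Type*} [MeasurableSpace Ω] {L : KilledLevy Ω} {A : AssumptionA L}

lemma S5.G0_eq (W : WHNorm L A) {l : ℂ} (hl : l.re < 0) {g : ℂ} (hg : 0 < g.re)
    (hlg : l + g ≠ 0) (x : ℝ) :
    ∫ y in Iio (-x), S5.fI x l 0 g y ∂W.Uh =
      (Complex.exp (-l * x) * W.UT x l - Complex.exp (g * x) * W.UT x (-g)) / (l + g) := by
  rw [setIntegral_congr_fun measurableSet_Iio
    (fun y hy => S5.fI_zero x l hl hlg (mem_Iio.1 hy))]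
  rw [integral_div]
  congr 1
  have hI1 : Integrable (fun y : ℝ => Complex.exp (-l * (x : ℂ)) * Complex.exp (-l * (y : ℂ)))
      (W.Uh.restrict (Iio (-x))) := ((W.hUhint l hl).restrict).const_mul _
  have hI2 : Integrable (fun y : ℝ => Complex.exp (g * (x : ℂ)) * Complex.exp (g * (y : ℂ)))
      (W.Uh.restrict (Iio (-x))) := by
    have h := ((W.hUhint (-g) (by simpa using hg)).restrict (s := Iio (-x))).const_mul
      (Complex.exp (g * (x : ℂ)))
    simpa using h
  calc ∫ y in Iio (-x), (Complex.exp (-l * ((y : ℂ) + (x : ℂ))) -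
          Complex.exp (g * ((y : ℂ) + (x : ℂ)))) ∂W.Uh
      = ∫ y in Iio (-x), (Complex.exp (-l * (x : ℂ)) * Complex.exp (-l * (y : ℂ)) -
          Complex.exp (g * (x : ℂ)) * Complex.exp (g * (y : ℂ))) ∂W.Uh := by
        apply integral_congr_ae
        refine Filter.Eventually.of_forall fun y => ?_
        dsimp only
        have hmerge : ∀ c : ℂ, Complex.exp (c * ((y : ℂ) + (x : ℂ))) =
            Complex.exp (c * (x : ℂ)) * Complex.exp (c * (y : ℂ)) := fun c => by
          rw [← Complex.exp_add]
          congr 1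
          ring
        rw [hmerge (-l), hmerge g]
    _ = (∫ y in Iio (-x), Complex.exp (-l * (x : ℂ)) * Complex.exp (-l * (y : ℂ)) ∂W.Uh) -
        ∫ y in Iio (-x), Complex.exp (g * (x : ℂ)) * Complex.exp (g * (y : ℂ)) ∂W.Uh :=
        integral_sub hI1 hI2
    _ = Complex.exp (-l * (x : ℂ)) * (∫ y in Iio (-x), Complex.exp (-l * (y : ℂ)) ∂W.Uh) -
        Complex.exp (g * (x : ℂ)) * ∫ y in Iio (-x), Complex.exp (g * (y : ℂ)) ∂W.Uh := by
        rw [integral_const_mul, integral_const_mul]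
    _ = Complex.exp (-l * x) * W.UT x l - Complex.exp (g * x) * W.UT x (-g) := by
        rw [WHNorm.UT, WHNorm.UT]
        simp only [neg_neg]

end S5main

/-- Proposition 2.6 (2). For `x > 0`, `j`, and `Re λ < 0`, `λ ≠ -γ_j`,
the quantity `n_j(x,λ)` is the Laplace transform, at `λ`, of the restriction to `(-∞,0)`
of the convolution of `y^{n_j} e^{-γ_j y} 1_{y>0} dy` with the restriction to `(-∞,0)`
of the shift by `+x` of `1_{(-∞,-x)}(y) Û(dy)`. -/
theorem statement5 {Ω : Type*} [MeasurableSpace Ω] {L : KilledLevy Ω} {A : AssumptionA L}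
    (W : WHNorm L A) (x : ℝ) (hx : 0 < x) (j : Fin A.n) :
    ∀ l : ℂ, l.re < 0 → l ≠ -A.γ j →
      W.nfun x l j =
        ∫ y in Iio (-x), (∫ u in Ioi (0 : ℝ),
          (if u + (y + x) < 0 then
            Complex.exp (-l * (u + (y + x))) * (u : ℂ) ^ (A.nj j) *
              Complex.exp (-A.γ j * u)
          else 0)) ∂W.Uh := by
  intro l hl hlg
  have hγ : 0 < (A.γ j).re := A.hγ j
  have hne : l + A.γ j ≠ 0 := fun h => hlg (by linear_combination h)
  have hmem : A.γ j ∈ {g : ℂ | 0 < g.re ∧ l + g ≠ 0} := ⟨hγ, hne⟩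
  have hopen : IsOpen {g : ℂ | 0 < g.re ∧ l + g ≠ 0} := by
    refine (isOpen_lt continuous_const Complex.continuous_re).inter ?_
    exact isOpen_compl_singleton.preimage (continuous_const.add continuous_id)
  have hev : (fun g : ℂ => (Complex.exp (-l * x) * W.UT x l -
        Complex.exp (g * x) * W.UT x (-g)) / (l + g))
      =ᶠ[nhds (A.γ j)] fun g => ∫ y in Iio (-x), S5.fI x l 0 g y ∂W.Uh := by
    filter_upwards [hopen.mem_nhds hmem] with g hg
    exact (S5.G0_eq W hl hg.1 hg.2 x).symm
  rw [WHNorm.nfun, S5.iteratedDeriv_congr_ev hev (A.nj j),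
    S5.iter_G x l W.Uh W.hUhint hl (A.nj j) (A.γ j) hγ,
    ← mul_assoc, ← mul_pow, neg_mul_neg, one_mul, one_pow, one_mul]
  rfl
end
end
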